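/- The transvectant is SL(2,ℂ)-equivariant: for binary forms f of degree n, g of degree p, r ≤ min(n,p), and γ ∈ SL(2,ℂ), one has (γ·f, γ·g)_r = γ·(f,g)_r, where (γ·f)(ξ) = f(γ⁻¹ξ). -/

import Mathlib

open Complex MvPolynomial Finset Matrix

/-- `k`-th iterated partial derivative in the variable `i` of a binary form. -/
noncomputable def pdIter (i : Fin 2) (k : ℕ) (p : MvPolynomial (Fin 2) ℂ) :
    MvPolynomial (Fin 2) ℂ :=
  (fun q => MvPolynomial.pderiv i q)^[k] p

/-- The transvectant of index `r`:
`(f,g)_r = Σ_{i=0}^{r} (−1)ⁱ C(r,i) (∂ʳf/∂u^{r−i}∂vⁱ)(∂ʳg/∂uⁱ∂v^{r−i})`. -/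
noncomputable def transvectant (r : ℕ) (f g : MvPolynomial (Fin 2) ℂ) :
    MvPolynomial (Fin 2) ℂ :=
  ∑ i ∈ Finset.range (r + 1),
    ((-1 : ℂ) ^ i * (r.choose i : ℂ)) •
      (pdIter 0 (r - i) (pdIter 1 i f) * pdIter 0 i (pdIter 1 (r - i) g))

/-- The action of `SL(2,ℂ)` on binary forms by linear substitution with the inverse matrix:
`(γ·f)(ξ) = f(γ⁻¹ξ)`. -/
noncomputable def slAct (γ : Matrix.SpecialLinearGroup (Fin 2) ℂ)
    (f : MvPolynomial (Fin 2) ℂ) : MvPolynomial (Fin 2) ℂ :=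
  MvPolynomial.bind₁
    (fun j => ∑ k : Fin 2,
      MvPolynomial.C ((↑γ : Matrix (Fin 2) (Fin 2) ℂ)⁻¹ j k) * MvPolynomial.X k) f

open scoped TensorProduct

abbrev RR : Type := MvPolynomial (Fin 2) ℂ

noncomputable instance : HasDistribNeg (Module.End ℂ (RR ⊗[ℂ] RR)) :=
  @NonUnitalNonAssocRing.toHasDistribNeg _ (NonAssocRing.toNonUnitalNonAssocRing (α := Module.End ℂ (RR ⊗[ℂ] RR)))

/-- Partial derivative as an endomorphism. -/
noncomputable def Pd (i : Fin 2) : Module.End ℂ RR := (pderiv i).toLinearMap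

lemma pderiv_pderiv_comm (i j : Fin 2) (p : RR) :
    pderiv i (pderiv j p) = pderiv j (pderiv i p) := by
  induction p using MvPolynomial.induction_on with
  | C a => simp
  | add p q hp hq => simp [hp, hq]
  | mul_X p k hp =>
    simp only [pderiv_mul, map_add, hp, pderiv_X]
    fin_cases i <;> fin_cases j <;> fin_cases k <;> simp

lemma Pd_comm (i j : Fin 2) : Commute (Pd i) (Pd j) :=
  LinearMap.ext fun p => pderiv_pderiv_comm i j p

lemma Pd_pow_apply (i : Fin 2) (k : ℕ) (p : RR) : (Pd i ^ k) p = pdIter i k p := by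
  rw [Module.End.pow_apply]; rfl

/-- Linear substitution by a matrix, as an algebra hom. -/
noncomputable def subst (A : Matrix (Fin 2) (Fin 2) ℂ) : RR →ₐ[ℂ] RR :=
  bind₁ (fun j => ∑ k : Fin 2, C (A j k) * X k)

lemma chain (A : Matrix (Fin 2) (Fin 2) ℂ) (i : Fin 2) (p : RR) :
    pderiv i (subst A p) = ∑ j : Fin 2, A j i • subst A (pderiv j p) := by
  induction p using MvPolynomial.induction_on with
  | C a => simp [subst]
  | add p q hp hq => simp [map_add, hp, hq, Finset.sum_add_distrib, smul_add]
  | mul_X p k hp =>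
    simp only [subst, Fin.sum_univ_two, smul_eq_C_mul] at hp ⊢
    simp only [_root_.map_mul, bind₁_X_right, pderiv_mul, hp, map_add, pderiv_X]
    fin_cases i <;> fin_cases k <;>
      simp [pderiv_mul, smul_eq_C_mul] <;> ring

/-- Substitution as a linear endomorphism. -/
noncomputable def SA (A : Matrix (Fin 2) (Fin 2) ℂ) : Module.End ℂ RR :=
  (subst A).toLinearMap

lemma Pd_mul_SA (A : Matrix (Fin 2) (Fin 2) ℂ) (i : Fin 2) :
    Pd i * SA A = SA A * (∑ j : Fin 2, A j i • Pd j) := by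
  apply LinearMap.ext
  intro p
  simp only [Module.End.mul_apply, LinearMap.sum_apply, LinearMap.smul_apply, map_sum,
    _root_.map_smul]
  exact chain A i p

noncomputable def XX : Module.End ℂ (RR ⊗[ℂ] RR) := TensorProduct.map (Pd 0) (Pd 1)
noncomputable def YY : Module.End ℂ (RR ⊗[ℂ] RR) := TensorProduct.map (Pd 1) (Pd 0)
noncomputable def Om : Module.End ℂ (RR ⊗[ℂ] RR) := XX - YY
noncomputable def mulM : RR ⊗[ℂ] RR →ₗ[ℂ] RR := LinearMap.mul' ℂ RR

lemma XX_comm_YY : Commute XX YY := by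
  unfold XX YY Commute SemiconjBy
  rw [← TensorProduct.map_mul, ← TensorProduct.map_mul, (Pd_comm 0 1).eq, (Pd_comm 1 0).eq]

lemma natCast_End (c : ℕ) :
    (c : Module.End ℂ (RR ⊗[ℂ] RR)) = (c : ℂ) • (1 : Module.End ℂ (RR ⊗[ℂ] RR)) := by
  rw [Nat.cast_smul_eq_nsmul, nsmul_eq_mul, mul_one]

lemma transvectant_eq (r : ℕ) (f g : RR) :
    transvectant r f g = mulM ((Om ^ r) (f ⊗ₜ[ℂ] g)) := by
  have hOm : Om = -YY + XX := by unfold Om; abel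
  have hc : Commute (-YY) XX := XX_comm_YY.symm.neg_left
  rw [hOm, hc.add_pow]
  rw [LinearMap.sum_apply, map_sum]
  refine Finset.sum_congr rfl fun k hk => ?_
  have hE : (-YY) ^ k * XX ^ (r - k) * ((r.choose k : ℕ) : Module.End ℂ (RR ⊗[ℂ] RR)) =
      ((-1 : ℂ) ^ k * (r.choose k : ℂ)) •
        TensorProduct.map (Pd 0 ^ (r - k) * Pd 1 ^ k) (Pd 0 ^ k * Pd 1 ^ (r - k)) := by
    have h1 : (-YY) ^ k = ((-1 : ℂ) ^ k) • (YY ^ k) := by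
      rw [← neg_one_smul ℂ YY, smul_pow]
    have h2 : YY ^ k * XX ^ (r - k) =
        TensorProduct.map (Pd 0 ^ (r - k) * Pd 1 ^ k) (Pd 0 ^ k * Pd 1 ^ (r - k)) := by
      rw [YY, XX, TensorProduct.map_pow, TensorProduct.map_pow, ← TensorProduct.map_mul,
        ((Pd_comm 1 0).pow_pow k (r - k)).eq]
    rw [h1, natCast_End, smul_mul_assoc, smul_mul_assoc, mul_smul_comm, mul_one, h2, smul_smul]
  rw [hE, LinearMap.smul_apply, _root_.map_smul, TensorProduct.map_tmul]
  rw [Module.End.mul_apply, Module.End.mul_apply, Pd_pow_apply, Pd_pow_apply, Pd_pow_apply,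
    Pd_pow_apply, mulM, LinearMap.mul'_apply]

lemma mulM_SS (A : Matrix (Fin 2) (Fin 2) ℂ) (z : RR ⊗[ℂ] RR) :
    mulM (TensorProduct.map (SA A) (SA A) z) = SA A (mulM z) := by
  have h : mulM ∘ₗ TensorProduct.map (SA A) (SA A) = (SA A) ∘ₗ mulM := by
    apply TensorProduct.ext'
    intro x y
    simp [mulM, LinearMap.mul'_apply, SA, _root_.map_mul]
  exact DFunLike.congr_fun h z

lemma Om_comm_SS (A : Matrix (Fin 2) (Fin 2) ℂ) (hA : A.det = 1) :
    Commute Om (TensorProduct.map (SA A) (SA A)) := by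
  have hdet : A 0 0 * A 1 1 - A 0 1 * A 1 0 = 1 := by
    rw [← Matrix.det_fin_two]; exact hA
  unfold Commute SemiconjBy
  have h0 := Pd_mul_SA A 0
  have h1 := Pd_mul_SA A 1
  calc Om * TensorProduct.map (SA A) (SA A)
      = TensorProduct.map (Pd 0 * SA A) (Pd 1 * SA A)
        - TensorProduct.map (Pd 1 * SA A) (Pd 0 * SA A) := by
        rw [Om, Module.End.mul_eq_comp, LinearMap.sub_comp, ← Module.End.mul_eq_comp,
          ← Module.End.mul_eq_comp, XX, YY, ← TensorProduct.map_mul, ← TensorProduct.map_mul]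
    _ = TensorProduct.map (SA A) (SA A) *
        (TensorProduct.map (∑ j : Fin 2, A j 0 • Pd j) (∑ j : Fin 2, A j 1 • Pd j)
          - TensorProduct.map (∑ j : Fin 2, A j 1 • Pd j) (∑ j : Fin 2, A j 0 • Pd j)) := by
        rw [h0, h1, TensorProduct.map_mul, TensorProduct.map_mul,
          Module.End.mul_eq_comp (TensorProduct.map (SA A) (SA A)),
          Module.End.mul_eq_comp (TensorProduct.map (SA A) (SA A)), ← LinearMap.comp_sub,
          ← Module.End.mul_eq_comp]
    _ = TensorProduct.map (SA A) (SA A) * Om := by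
        congr 1
        simp only [Fin.sum_univ_two, TensorProduct.map_add_left, TensorProduct.map_add_right,
          TensorProduct.map_smul_left, TensorProduct.map_smul_right, smul_smul, Om, XX, YY]
        match_scalars
        · ring
        · linear_combination -hdet
        · linear_combination hdet
        · ring

lemma slAct_eq (γ : Matrix.SpecialLinearGroup (Fin 2) ℂ) (h : RR) :
    slAct γ h = SA ((↑γ : Matrix (Fin 2) (Fin 2) ℂ)⁻¹) h := rfl

/-- The transvectant is `SL(2,ℂ)`-equivariant: for binary forms `f` of degree `n`, `g` of
degree `p`, `r ≤ min(n,p)` and `γ ∈ SL(2,ℂ)`, `(γ·f, γ·g)_r = γ·(f,g)_r`. -/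
theorem transvectant_equivariant (n p r : ℕ) (f g : MvPolynomial (Fin 2) ℂ)
    (hf : f.IsHomogeneous n) (hg : g.IsHomogeneous p) (hr : r ≤ min n p)
    (γ : Matrix.SpecialLinearGroup (Fin 2) ℂ) :
    transvectant r (slAct γ f) (slAct γ g) = slAct γ (transvectant r f g) := by
  set A : Matrix (Fin 2) (Fin 2) ℂ := (↑γ : Matrix (Fin 2) (Fin 2) ℂ)⁻¹ with hAdef
  have hA : A.det = 1 := by
    rw [hAdef, Matrix.det_nonsing_inv, Matrix.SpecialLinearGroup.det_coe, Ring.inverse_one]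
  have hcomm : Commute (Om ^ r) (TensorProduct.map (SA A) (SA A)) :=
    (Om_comm_SS A hA).pow_left r
  calc transvectant r (slAct γ f) (slAct γ g)
      = mulM ((Om ^ r) ((SA A f) ⊗ₜ[ℂ] (SA A g))) := by
        rw [slAct_eq, slAct_eq, transvectant_eq]
    _ = mulM ((Om ^ r) ((TensorProduct.map (SA A) (SA A)) (f ⊗ₜ[ℂ] g))) := by
        rw [TensorProduct.map_tmul]
    _ = mulM ((TensorProduct.map (SA A) (SA A)) ((Om ^ r) (f ⊗ₜ[ℂ] g))) := by
        rw [← Module.End.mul_apply, hcomm.eq, Module.End.mul_apply]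
    _ = SA A (mulM ((Om ^ r) (f ⊗ₜ[ℂ] g))) := mulM_SS A _
    _ = slAct γ (transvectant r f g) := by rw [transvectant_eq, slAct_eq]
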